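/- For any d ∈ ℕ and 0 < ζ < 1 there exist constants ε₀, n₀ depending only on d and ζ such that the following holds. Let n > n₀, let k₁, k₂ ∈ (ζn, (d−1)n/d + d + 1), and let F₁, …, F_d ⊆ binom([n], k₁) and F_{d+1} ⊆ binom([n], k₂) be families that are cross free of a d-simplex. If μ(F_i) ≥ 1 − ε₀ for all i ∈ [d], then F_{d+1} is empty. -/

import Mathlib

open Finset

/-- `A` is a `d`-simplex: `d+1` sets with empty total intersection such that
the intersection of any `d` of them is nonempty. -/
def IsSimplex (n d : ℕ) (A : Fin (d + 1) → Finset (Fin n)) : Prop :=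
  Finset.univ.inf A = ∅ ∧ ∀ i, ((Finset.univ.erase i).inf A).Nonempty



section UnionBound
variable {α : Type*} [Fintype α] [DecidableEq α]

lemma exists_perm_image {U U' : Finset α}
    (h : U.card = U'.card) : ∃ ρ : Equiv.Perm α, U.image ρ = U' := by
  classical
  have hc : Uᶜ.card = U'ᶜ.card := by
    simp [Finset.card_compl, h]
  let e : (U : Finset α) ≃ (U' : Finset α) := Finset.equivOfCardEq h
  let e' : {a : α // a ∉ U} ≃ {a : α // a ∉ U'} :=
    ((Equiv.subtypeEquivRight (fun a => (Finset.mem_compl).symm)).trans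
      (Finset.equivOfCardEq hc)).trans
      (Equiv.subtypeEquivRight (fun a => Finset.mem_compl))
  let ρ : Equiv.Perm α :=
    (Equiv.sumCompl (· ∈ U)).symm.trans ((Equiv.sumCongr e e').trans
      (Equiv.sumCompl (· ∈ U')))
  refine ⟨ρ, ?_⟩
  have hmap : ∀ x ∈ U, ρ x ∈ U' := by
    intro x hx
    have : ρ x = (e ⟨x, hx⟩ : α) := by
      simp [ρ, Equiv.sumCompl_symm_apply_of_pos (p := (· ∈ U)) hx]
    rw [this]
    exact (e ⟨x, hx⟩).2
  apply Finset.eq_of_subset_of_card_le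
  · intro y hy
    obtain ⟨x, hx, rfl⟩ := Finset.mem_image.1 hy
    exact hmap x hx
  · rw [Finset.card_image_of_injective _ ρ.injective, h]

private def fib (S U : Finset α) : Finset (Equiv.Perm α) :=
  (univ : Finset (Equiv.Perm α)).filter (fun π : Equiv.Perm α => S.image (⇑π) = U)

lemma fiber_card_le (S : Finset α) {U U' : Finset α} (h : U.card = U'.card) :
    (fib S U).card ≤ (fib S U').card := by
  obtain ⟨ρ, hρ⟩ := exists_perm_image h
  apply Finset.card_le_card_of_injOn (fun π => ρ * π)
  · intro π hπ
    simp only [fib, Finset.mem_coe, Finset.mem_filter, Finset.mem_univ, true_and] at hπ ⊢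
    have : S.image ⇑(ρ * π) = (S.image ⇑π).image ⇑ρ := by
      rw [Finset.image_image]; rfl
    rw [this, hπ, hρ]
  · intro a _ b _ hab
    simpa using mul_left_cancel hab

lemma fiber_card_eq (S : Finset α) {U U' : Finset α} (h : U.card = U'.card) :
    (fib S U).card = (fib S U').card :=
  le_antisymm (fiber_card_le S h) (fiber_card_le S h.symm)

lemma exists_perm_all_mem {k d : ℕ} (S : Fin d → Finset α) (hS : ∀ i, (S i).card = k)
    (G : Fin d → Finset (Finset α))
    (hG : ∀ i, G i ⊆ (univ : Finset α).powersetCard k)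
    (hsum : ∑ i, (((univ : Finset α).powersetCard k).card - (G i).card) <
      ((univ : Finset α).powersetCard k).card) :
    ∃ π : Equiv.Perm α, ∀ i, (S i).image ⇑π ∈ G i := by
  classical
  set pc := (univ : Finset α).powersetCard k with hpc
  set C := pc.card with hC
  set P := (univ : Finset (Equiv.Perm α)).card with hP
  have himg : ∀ (i : Fin d) (π : Equiv.Perm α), (S i).image ⇑π ∈ pc := by
    intro i π
    rw [hpc, Finset.mem_powersetCard_univ, Finset.card_image_of_injective _ π.injective]
    exact hS i
  set m : Fin d → ℕ := fun i => (fib (S i) (S i)).card with hm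
  have hfib : ∀ (i : Fin d), ∀ U ∈ pc, (fib (S i) U).card = m i := by
    intro i U hU
    rw [hpc, Finset.mem_powersetCard_univ] at hU
    exact fiber_card_eq (S i) (by rw [hU, hS i])
  have htot : ∀ i : Fin d, P = C * m i := by
    intro i
    rw [hP, Finset.card_eq_sum_card_fiberwise (fun (π : Equiv.Perm α) _ => himg i π)]
    have : ∀ U ∈ pc,
        ((univ : Finset (Equiv.Perm α)).filter (fun π : Equiv.Perm α => (S i).image ⇑π = U)).card
          = m i := fun U hU => hfib i U hU
    rw [Finset.sum_congr rfl this, Finset.sum_const, smul_eq_mul]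
  set Bad : Fin d → Finset (Equiv.Perm α) := fun i =>
    (univ : Finset (Equiv.Perm α)).filter (fun π : Equiv.Perm α => (S i).image ⇑π ∉ G i) with hBad
  have hbadcard : ∀ i, (Bad i).card = (C - (G i).card) * m i := by
    intro i
    have hmapsto : ∀ π ∈ Bad i, (S i).image ⇑π ∈ pc \ G i := by
      intro π hπ
      rw [hBad, Finset.mem_filter] at hπ
      exact Finset.mem_sdiff.2 ⟨himg i π, hπ.2⟩
    rw [Finset.card_eq_sum_card_fiberwise hmapsto]
    have heq : ∀ U ∈ pc \ G i,
        ((Bad i).filter (fun π : Equiv.Perm α => (S i).image ⇑π = U)).card = m i := by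
      intro U hU
      have : (Bad i).filter (fun π : Equiv.Perm α => (S i).image ⇑π = U) = fib (S i) U := by
        rw [hBad, fib, Finset.filter_filter]
        apply Finset.filter_congr
        intro π _
        constructor
        · rintro ⟨_, h2⟩; exact h2
        · intro h2
          refine ⟨?_, h2⟩
          rw [h2]
          exact (Finset.mem_sdiff.1 hU).2
      rw [this]
      exact hfib i U (Finset.mem_sdiff.1 hU).1
    rw [Finset.sum_congr rfl heq, Finset.sum_const, smul_eq_mul,
      Finset.card_sdiff_of_subset (hG i)]
  by_contra hcon
  push_neg at hcon
  have hcover : (univ : Finset (Equiv.Perm α)) ⊆ Finset.univ.biUnion Bad := by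
    intro π _
    obtain ⟨i, hi⟩ := hcon π
    exact Finset.mem_biUnion.2 ⟨i, Finset.mem_univ i, Finset.mem_filter.2 ⟨Finset.mem_univ π, hi⟩⟩
  have hPle : P ≤ ∑ i, (Bad i).card :=
    le_trans (Finset.card_le_card hcover) (Finset.card_biUnion_le)
  have hPpos : 0 < P := Finset.card_pos.2 Finset.univ_nonempty
  have hdpos : 0 < d := by
    rcases Nat.eq_zero_or_pos d with rfl | h
    · obtain ⟨i, _⟩ := hcon 1
      exact i.elim0
    · exact h
  have hCpos : 0 < C := by
    by_contra h0
    push_neg at h0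
    interval_cases C
    have := htot ⟨0, hdpos⟩
    omega
  have key : P * C ≤ (∑ i, (C - (G i).card)) * P := by
    calc P * C ≤ (∑ i, (Bad i).card) * C := Nat.mul_le_mul_right _ hPle
    _ = ∑ i, ((C - (G i).card) * (m i * C)) := by
        rw [Finset.sum_mul]
        exact Finset.sum_congr rfl (fun i _ => by rw [hbadcard i, Nat.mul_assoc])
    _ = (∑ i, (C - (G i).card)) * P := by
        rw [Finset.sum_mul]
        exact Finset.sum_congr rfl (fun i _ => by rw [Nat.mul_comm (m i) C, ← htot i])
  have hlt : (∑ i, (C - (G i).card)) * P < C * P :=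
    Nat.mul_lt_mul_of_lt_of_le hsum (le_refl P) hPpos
  rw [Nat.mul_comm P C] at key
  exact absurd (lt_of_le_of_lt key hlt) (lt_irrefl _)

end UnionBound

/-- Construction of `d` sets of size `k` in `Fin m` with empty common intersection,
possible as soon as `d*(m-k) ≥ m`. -/
lemma exists_templates (d m k : ℕ) (hk : k ≤ m) (hq : m ≤ d * (m - k)) :
    ∃ S : Fin d → Finset (Fin m), (∀ i, (S i).card = k) ∧
      (Finset.univ.inf S = ∅) := by
  classical
  set q := m - k with hqdef
  rcases Nat.eq_zero_or_pos m with rfl | hm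
  · refine ⟨fun _ => ∅, fun i => by simpa using (Nat.le_zero.1 hk).symm, ?_⟩
    apply Finset.eq_empty_of_forall_notMem
    intro x
    exact x.elim0
  have hqpos : 0 < q := by
    rcases Nat.eq_zero_or_pos q with h0 | h
    · rw [h0, Nat.mul_zero] at hq; omega
    · exact h
  set s : Fin d → ℕ := fun i => min (i.1 * q) (m - q) with hs
  have hsub : ∀ i : Fin d, ∀ j ∈ Finset.Ico (s i) (s i + q), j < m := by
    intro i j hj
    rw [Finset.mem_Ico] at hj
    have : s i ≤ m - q := min_le_right _ _
    omega
  set T : Fin d → Finset (Fin m) := fun i => (Finset.Ico (s i) (s i + q)).attachFin (hsub i)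
    with hT
  refine ⟨fun i => (T i)ᶜ, ?_, ?_⟩
  · intro i
    rw [Finset.card_compl, Finset.card_attachFin, Nat.card_Ico, Fintype.card_fin]
    omega
  · apply Finset.eq_empty_of_forall_notMem
    intro x hx
    have hxm : x.1 < m := x.2
    have hxlt : x.1 < d * q := lt_of_lt_of_le hxm hq
    have hi0 : x.1 / q < d := Nat.div_lt_of_lt_mul (by rwa [Nat.mul_comm])
    set i0 : Fin d := ⟨x.1 / q, hi0⟩ with hi0def
    have hdm : x.1 / q * q + x.1 % q = x.1 := by rw [Nat.mul_comm] at *; exact Nat.div_add_mod x.1 q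
    have hmod : x.1 % q < q := Nat.mod_lt x.1 hqpos
    have hxT : x ∈ T i0 := by
      rw [hT, Finset.mem_attachFin, Finset.mem_Ico]
      have hsi : s i0 = min (x.1 / q * q) (m - q) := rfl
      rw [hsi]
      rcases le_total (x.1 / q * q) (m - q) with hc | hc
      · rw [min_eq_left hc]; omega
      · rw [min_eq_right hc]; omega
    have hmem := Finset.mem_inf.1 hx i0 (Finset.mem_univ i0)
    exact (Finset.mem_compl.1 hmem) hxT

lemma ratio_stepA {γ : ℝ} (hγ : 0 ≤ γ) (n k : ℕ) (h : γ * (n + 1 : ℝ) ≤ (k + 1 : ℝ)) :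
    γ * ((n+1).choose (k+1) : ℝ) ≤ (n.choose k : ℝ) := by
  have hid : ((n:ℝ) + 1) * (n.choose k : ℝ) = ((n+1).choose (k+1) : ℝ) * ((k:ℝ) + 1) := by
    exact_mod_cast congrArg (Nat.cast : ℕ → ℝ) (Nat.add_one_mul_choose_eq n k)
  have hn : (0:ℝ) < (n:ℝ) + 1 := by positivity
  have hc1 : (0:ℝ) ≤ (((n+1).choose (k+1) : ℕ) : ℝ) := by positivity
  nlinarith [mul_le_mul_of_nonneg_right h hc1]

lemma ratio_stepB {γ : ℝ} (hγ : 0 ≤ γ) (n k : ℕ) (hk : k ≤ n + 1)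
    (h : γ * (n + 1 : ℝ) ≤ ((n + 1 - k : ℕ) : ℝ)) :
    γ * ((n+1).choose k : ℝ) ≤ (n.choose k : ℝ) := by
  have hid : (n.choose k : ℝ) * ((n:ℝ) + 1)
      = ((n+1).choose k : ℝ) * ((n + 1 - k : ℕ) : ℝ) := by
    exact_mod_cast congrArg (Nat.cast : ℕ → ℝ) (Nat.choose_mul_succ_eq n k)
  have hn : (0:ℝ) < (n:ℝ) + 1 := by positivity
  have hc1 : (0:ℝ) ≤ (((n+1).choose k : ℕ) : ℝ) := by positivity
  nlinarith [mul_le_mul_of_nonneg_right h hc1]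

/-- iterated step A -/
lemma ratio_chainA {γ : ℝ} (hγ : 0 ≤ γ) (b : ℕ) : ∀ n k : ℕ,
    (∀ i < b, γ * ((n + i + 1 : ℕ) : ℝ) ≤ ((k + i + 1 : ℕ) : ℝ)) →
    γ ^ b * (((n + b).choose (k + b) : ℕ) : ℝ) ≤ ((n.choose k : ℕ) : ℝ) := by
  induction b with
  | zero => intro n k _; simp
  | succ b ih =>
    intro n k hcond
    have h1 : γ ^ b * (γ * (((n + b + 1).choose (k + b + 1) : ℕ) : ℝ))
        ≤ γ ^ b * (((n + b).choose (k + b) : ℕ) : ℝ) := by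
      apply mul_le_mul_of_nonneg_left _ (pow_nonneg hγ b)
      have := hcond b (Nat.lt_succ_self b)
      push_cast at this ⊢
      exact ratio_stepA hγ (n + b) (k + b) (by push_cast; linarith)
    have e1 : n + (b+1) = n + b + 1 := by omega
    have e2 : k + (b+1) = k + b + 1 := by omega
    rw [e1, e2, pow_succ]
    calc γ ^ b * γ * (((n + b + 1).choose (k + b + 1) : ℕ) : ℝ)
        = γ ^ b * (γ * (((n + b + 1).choose (k + b + 1) : ℕ) : ℝ)) := by ring
      _ ≤ γ ^ b * (((n + b).choose (k + b) : ℕ) : ℝ) := h1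
      _ ≤ ((n.choose k : ℕ) : ℝ) := ih n k (fun i hi => hcond i (Nat.lt_succ_of_lt hi))

set_option maxHeartbeats 2000000 in
theorem stmt17 (d : ℕ) (ζ : ℝ) (hζ : ζ ∈ Set.Ioo (0:ℝ) 1) :
    ∃ (ε₀ : ℝ) (n₀ : ℕ), 0 < ε₀ ∧
      ∀ (n k₁ k₂ : ℕ) (F : Fin (d + 1) → Finset (Finset (Fin n))),
        n₀ < n →
        ζ * n < (k₁ : ℝ) → (k₁ : ℝ) < ((d : ℝ) - 1) * n / d + d + 1 →
        ζ * n < (k₂ : ℝ) → (k₂ : ℝ) < ((d : ℝ) - 1) * n / d + d + 1 →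
        (∀ i : Fin (d + 1), i ≠ Fin.last d → ∀ A ∈ F i, A.card = k₁) →
        (∀ A ∈ F (Fin.last d), A.card = k₂) →
        (¬ ∃ A : Fin (d + 1) → Finset (Fin n), (∀ i, A i ∈ F i) ∧ IsSimplex n d A) →
        (∀ i : Fin (d + 1), i ≠ Fin.last d →
          ((F i).card : ℝ) / (n.choose k₁) ≥ 1 - ε₀) →
        F (Fin.last d) = ∅ := by
  obtain ⟨hζ0, hζ1⟩ := hζ
  -- constants
  set t : ℕ := d * d + d with ht
  set N : ℕ := 2 * (d + 2) ^ 4 with hN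
  set γ : ℝ := min ζ (1 / (d + 1)) / 2 with hγ
  have hγ0 : 0 < γ := by
    rw [hγ]
    have : (0:ℝ) < 1 / (d + 1) := by positivity
    positivity
  set ε₀ : ℝ := γ ^ (d + t) / (2 * (d + 1)) with hε
  have hε0 : 0 < ε₀ := by rw [hε]; positivity
  refine ⟨ε₀, ⌈(N : ℝ) / ζ⌉₊ + N, hε0, ?_⟩
  intro n k₁ k₂ F hn hk1l hk1u hk2l hk2u hF1 hF2 hnosimp hmeas
  -- basic size facts
  have hnN : N ≤ n := by
    have h1 : (N:ℝ) ≤ (N:ℝ)/ζ := by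
      rw [le_div_iff₀ hζ0]
      nlinarith only [(by positivity : (0:ℝ) ≤ (N:ℝ)), hζ1, hζ0]
    have h2 : ((⌈(N : ℝ) / ζ⌉₊ : ℕ) : ℝ) ≥ (N:ℝ)/ζ := Nat.le_ceil _
    have : (N:ℝ) ≤ (n:ℝ) := by
      have : (⌈(N : ℝ) / ζ⌉₊ : ℕ) ≤ n := by omega
      calc (N:ℝ) ≤ (N:ℝ)/ζ := h1
        _ ≤ ((⌈(N : ℝ) / ζ⌉₊ : ℕ) : ℝ) := h2
        _ ≤ (n:ℝ) := by exact_mod_cast this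
    exact_mod_cast this
  have hζn : (N : ℝ) < ζ * n := by
    have h2 : (N:ℝ)/ζ ≤ ((⌈(N : ℝ) / ζ⌉₊ : ℕ) : ℝ) := Nat.le_ceil _
    have h3 : ((⌈(N : ℝ) / ζ⌉₊ : ℕ) : ℝ) < (n:ℝ) := by
      have : (⌈(N : ℝ) / ζ⌉₊ : ℕ) < n := by omega
      exact_mod_cast this
    have := lt_of_le_of_lt h2 h3
    rw [div_lt_iff₀ hζ0] at this
    linarith only [this]
  have hk1N : (N : ℝ) < k₁ := lt_trans hζn hk1l
  have hk2N : (N : ℝ) < k₂ := lt_trans hζn hk2l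
  -- small d handled by vacuity
  rcases Nat.lt_or_ge d 2 with hd | hd2
  · exfalso
    have hNge : (3:ℝ) ≤ (N:ℝ) := by
      have h16 : (2:ℕ)^4 ≤ (d+2)^4 := Nat.pow_le_pow_left (by omega) 4
      have : (32:ℕ) ≤ N := by rw [hN]; omega
      exact_mod_cast le_trans (by norm_num) this
    interval_cases d
    · norm_num at hk1u
      rw [hk1u] at hk1N
      norm_num at hk1N
      linarith only [hk1N, hNge]
    · norm_num at hk1u
      have : ((k₁:ℕ):ℝ) < 2 := by exact_mod_cast (by omega : k₁ < 2)
      linarith only [this, hk1N, hNge]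

  -- now d ≥ 2
  have ht1 : 1 ≤ t := by
    have hdd : d ≤ d * d + d := Nat.le_add_left d (d*d)
    omega
  set b : ℕ := t + d - 1 with hb
  have hb1 : b + 1 = t + d := by omega
  have hD2 : (2:ℝ) ≤ (d:ℝ) := by exact_mod_cast hd2
  have hdpos : (0:ℝ) < d := by linarith only [hD2]
  have hnR : 2 * ((d:ℝ)+2)^4 ≤ (n:ℝ) := by
    have h : (N:ℝ) ≤ n := by exact_mod_cast hnN
    rw [hN] at h; push_cast at h; linarith only [h]
  have htR : (t:ℝ) = (d:ℝ)*(d:ℝ) + d := by rw [ht]; push_cast; ring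
  have hbR : ((b:ℕ):ℝ) = (d:ℝ)*(d:ℝ) + 2*(d:ℝ) - 1 := by
    have : ((b:ℕ):ℝ) + 1 = ((t + d : ℕ) : ℝ) := by exact_mod_cast congrArg (Nat.cast : ℕ → ℝ) hb1
    push_cast at this
    linarith only [this, htR]
  have hNR : ((N:ℕ):ℝ) = 2 * ((d:ℝ)+2)^4 := by rw [hN]; push_cast; ring
  have hD0 : (0:ℝ) ≤ (d:ℝ) := by linarith only [hD2]
  have hmon3 : (0:ℝ) ≤ (d:ℝ)*(d:ℝ) := by positivity
  have hmon2 : (0:ℝ) ≤ (d:ℝ)*(d:ℝ)*(d:ℝ) := by positivity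
  have hmon4 : (0:ℝ) ≤ (d:ℝ)*(d:ℝ)*((d:ℝ)*(d:ℝ)) := by positivity
  have hsq : 2*(d:ℝ) ≤ (d:ℝ)*(d:ℝ) := by nlinarith only [hD2]
  have hcube : 2*((d:ℝ)*(d:ℝ)) ≤ (d:ℝ)*(d:ℝ)*(d:ℝ) := by nlinarith only [hD2, hsq, hmon3]
  have hNbig : (d:ℝ)*(d:ℝ)*(d:ℝ) + 2*((d:ℝ)*(d:ℝ)) + 2*(d:ℝ) + 2 ≤ (N:ℝ) := by
    rw [hNR]
    have hexp : 2 * ((d:ℝ)+2)^4 = 2*((d:ℝ)*(d:ℝ)*((d:ℝ)*(d:ℝ))) + 16*((d:ℝ)*(d:ℝ)*(d:ℝ))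
        + 48*((d:ℝ)*(d:ℝ)) + 64*(d:ℝ) + 32 := by ring
    rw [hexp]
    linarith only [hmon4, hmon2, hmon3, hD0]
  have hNn : (N:ℝ) ≤ (n:ℝ) := by exact_mod_cast hnN
  have hnbig : (d:ℝ)*(d:ℝ)*(d:ℝ) + 2*((d:ℝ)*(d:ℝ)) + 2*(d:ℝ) + 2 ≤ (n:ℝ) :=
    le_trans hNbig hNn
  -- multiplied-out upper bounds
  have hmul : (d:ℝ) * (((d:ℝ)-1)*n/d + d + 1) = ((d:ℝ)-1)*n + d*d + d := by
    have hd0 : (d:ℝ) ≠ 0 := ne_of_gt hdpos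
    field_simp
  have hk1u' : (d:ℝ) * k₁ < ((d:ℝ)-1) * n + d*d + d := by
    calc (d:ℝ) * k₁ < (d:ℝ) * (((d:ℝ)-1)*n/d + d + 1) := by
          exact mul_lt_mul_of_pos_left hk1u hdpos
      _ = ((d:ℝ)-1) * n + d*d + d := hmul
  have hk2u' : (d:ℝ) * k₂ < ((d:ℝ)-1) * n + d*d + d := by
    calc (d:ℝ) * k₂ < (d:ℝ) * (((d:ℝ)-1)*n/d + d + 1) := by
          exact mul_lt_mul_of_pos_left hk2u hdpos
      _ = ((d:ℝ)-1) * n + d*d + d := hmul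
  -- ℕ facts
  have hNA1 : d ≤ k₂ := by
    have : (d:ℝ) ≤ (k₂:ℝ) := by linarith only [hk2N, hNbig, hmon2, hmon3, hD0]
    exact_mod_cast this
  have hNA2 : k₂ + t ≤ n := by
    have hmul2 : (d:ℝ) * ((k₂:ℝ) + t) < (d:ℝ) * n := by
      rw [htR]
      nlinarith only [hk2u', hnbig]
    have := lt_of_mul_lt_mul_left hmul2 hD0
    have h2 : ((k₂ + t : ℕ):ℝ) ≤ ((n:ℕ):ℝ) := by push_cast; linarith only [this]
    exact_mod_cast h2
  have hNA3 : k₁ + 2 ≤ n := by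
    have hmul2 : (d:ℝ) * ((k₁:ℝ) + 2) < (d:ℝ) * n := by
      nlinarith only [hk1u', hnbig, hD2]
    have := lt_of_mul_lt_mul_left hmul2 hD0
    have h2 : ((k₁ + 2 : ℕ):ℝ) ≤ ((n:ℕ):ℝ) := by push_cast; linarith only [this]
    exact_mod_cast h2
  have hNA4 : b + 1 ≤ k₁ := by
    have : ((b:ℕ):ℝ) + 1 ≤ (k₁:ℝ) := by linarith only [hk1N, hNbig, hbR, hmon2, hD0, hmon3]
    have h2 : ((b + 1 : ℕ):ℝ) ≤ ((k₁:ℕ):ℝ) := by push_cast; linarith only [this]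
    exact_mod_cast h2
  -- decompositions
  set k' : ℕ := k₁ - b with hk'
  set n' : ℕ := n - (b+1) with hn'
  have hkd : k₁ = k' + b := by omega
  have hnd : n = n' + (b+1) := by omega
  have hk'n' : k' + 1 ≤ n' := by omega
  have hnk : n' + 1 - k' = n - k₁ := by omega
  -- real versions of decomposition facts
  have hk1R : (k₁:ℝ) = (k':ℝ) + (b:ℝ) := by exact_mod_cast congrArg (Nat.cast : ℕ → ℝ) hkd
  have hnRd : (n:ℝ) = (n':ℝ) + ((b:ℝ)+1) := by
    have := congrArg (Nat.cast : ℕ → ℝ) hnd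
    push_cast at this
    linarith only [this]
  -- condition for templates : n' ≤ d * (n' - k')
  have hA5 : n' ≤ d * (n' - k') := by
    have hsub : ((n' - k' : ℕ):ℝ) = (n':ℝ) - k' := by
      have : k' ≤ n' := by omega
      exact Nat.cast_sub this
    have hdk' : (d:ℝ) * k' < ((d:ℝ)-1) * n' := by nlinarith only [hk1u', hk1R, hnRd, hbR, hD2]
    have : (n':ℝ) < (d:ℝ) * ((n' - k' : ℕ):ℝ) := by
      rw [hsub]
      nlinarith only [hdk', hD2]
    have h2 : ((n':ℕ):ℝ) < ((d * (n' - k') : ℕ):ℝ) := by push_cast; linarith only [this]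
    exact_mod_cast le_of_lt h2
  -- the binomial chain
  have hγζ : γ ≤ ζ / 2 := by
    rw [hγ]
    have := min_le_left ζ (1/((d:ℝ)+1))
    linarith only [this]
  have hγd : γ * (2*((d:ℝ)+1)) ≤ 1 := by
    rw [hγ]
    have h1 := min_le_right ζ (1/((d:ℝ)+1))
    have h2 : (0:ℝ) < (d:ℝ)+1 := by linarith only [hD0]
    rw [div_mul_eq_mul_div, div_le_one (by norm_num : (0:ℝ) < 2)]
    calc (ζ ⊓ (1/((d:ℝ)+1))) * (2*((d:ℝ)+1)) ≤ (1/((d:ℝ)+1)) * (2*((d:ℝ)+1)) := by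
          apply mul_le_mul_of_nonneg_right h1
          positivity
      _ = 2 := by field_simp
  have hstepB : γ * (((n' + b + 1).choose (k' + b) : ℕ) : ℝ) ≤ (((n' + b).choose (k' + b) : ℕ) : ℝ) := by
    apply ratio_stepB (le_of_lt hγ0) (n' + b) (k' + b) (by omega)
    have hcast : ((n' + b + 1 - (k' + b) : ℕ):ℝ) = (n:ℝ) - k₁ := by
      have h1 : n' + b + 1 - (k' + b) = n - k₁ := by omega
      rw [h1]
      exact_mod_cast Nat.cast_sub (by omega)
    rw [hcast]
    have hnk1 : (d:ℝ) * ((n:ℝ) - k₁) ≥ (n:ℝ) - (d:ℝ)*(d:ℝ) - d := by nlinarith only [hk1u']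
    have hcast2 : ((n' + b : ℕ):ℝ) + 1 = (n:ℝ) := by push_cast; linarith only [hnRd]
    rw [hcast2]
    set M : ℝ := (n:ℝ) - k₁ with hM
    have e2 : (d:ℝ)*n ≤ 2*((d:ℝ)+1)*((n:ℝ) - (d:ℝ)*(d:ℝ) - d) := by
      nlinarith only [mul_le_mul_of_nonneg_left hnbig (by linarith only [hD0] : (0:ℝ) ≤ (d:ℝ)+2), hD2, hmon2, hmon3, hmon4, hD0]
    have e1 : 2*((d:ℝ)+1)*((n:ℝ) - (d:ℝ)*(d:ℝ) - d) ≤ 2*((d:ℝ)+1)*((d:ℝ)*M) := by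
      apply mul_le_mul_of_nonneg_left _ (by linarith only [hD0] : (0:ℝ) ≤ 2*((d:ℝ)+1))
      linarith only [hnk1]
    have e3 : (d:ℝ)*n ≤ (d:ℝ)*(2*((d:ℝ)+1)*M) := by nlinarith only [e2, e1]
    have e4 : (n:ℝ) ≤ 2*((d:ℝ)+1)*M := le_of_mul_le_mul_left e3 hdpos
    have e5 : γ * (2*((d:ℝ)+1)) * (n:ℝ) ≤ (n:ℝ) :=
      calc γ * (2*((d:ℝ)+1)) * (n:ℝ) ≤ 1 * (n:ℝ) :=
            mul_le_mul_of_nonneg_right hγd (Nat.cast_nonneg n)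
        _ = (n:ℝ) := one_mul _
    have e6 : (2*((d:ℝ)+1)) * (γ * n) ≤ (2*((d:ℝ)+1)) * M := by
      calc (2*((d:ℝ)+1)) * (γ * n) = γ * (2*((d:ℝ)+1)) * (n:ℝ) := by ring
        _ ≤ (n:ℝ) := e5
        _ ≤ 2*((d:ℝ)+1)*M := e4
    exact le_of_mul_le_mul_left e6 (by linarith only [hD0])
  have hchain : γ ^ b * (((n' + b).choose (k' + b) : ℕ) : ℝ) ≤ ((n'.choose k' : ℕ) : ℝ) := by
    apply ratio_chainA (le_of_lt hγ0)
    intro i hi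
    push_cast
    have hζn2 : 2 * ((b:ℕ):ℝ) ≤ ζ * n := by
      have : 2 * ((b:ℕ):ℝ) ≤ (N:ℝ) := by
        rw [hbR]
        linarith only [hNbig, hsq, hcube, hD0, hmon3]
      linarith only [this, hζn]
    have h1 : γ * ((n':ℝ) + i + 1) ≤ γ * n := by
      apply mul_le_mul_of_nonneg_left _ hγ0.le
      have : (i:ℝ) < b := by exact_mod_cast hi
      linarith only [this, hnRd]
    have h2 : γ * (n:ℝ) ≤ ζ * n / 2 := by
      have hn0 : (0:ℝ) ≤ n := Nat.cast_nonneg n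
      nlinarith only [hγζ, hn0, hγ0]
    have h3 : ζ * (n:ℝ) - b ≤ (k':ℝ) + 1 := by
      have := hk1l
      rw [hk1R] at this
      linarith only [this]
    have : (i:ℝ) ≥ 0 := Nat.cast_nonneg i
    linarith only [this, h1, h2, h3, hζn2]
  have hchoose_pos : (0:ℝ) < (n.choose k₁ : ℝ) := by
    have : 0 < n.choose k₁ := Nat.choose_pos (by omega)
    exact_mod_cast this
  have hchoose'_pos : (0:ℝ) < (n'.choose k' : ℝ) := by
    have : 0 < n'.choose k' := Nat.choose_pos (by omega)
    exact_mod_cast this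
  have hkey : γ ^ (b+1) * (n.choose k₁ : ℝ) ≤ (n'.choose k' : ℝ) := by
    have e1 : n.choose k₁ = (n' + b + 1).choose (k' + b) := by
      rw [hkd, hnd]
      exact congrArg (fun m => Nat.choose m (k' + b)) (by omega)
    calc γ ^ (b+1) * (n.choose k₁ : ℝ)
        = γ ^ b * (γ * (((n' + b + 1).choose (k' + b) : ℕ) : ℝ)) := by
          rw [e1, pow_succ]; ring
      _ ≤ γ ^ b * (((n' + b).choose (k' + b) : ℕ) : ℝ) :=
          mul_le_mul_of_nonneg_left hstepB (pow_nonneg hγ0.le b)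
      _ ≤ ((n'.choose k' : ℕ) : ℝ) := hchain
  -- suppose B ∈ F (last)
  rw [Finset.eq_empty_iff_forall_notMem]
  intro B hB
  apply hnosimp
  have hcardB : B.card = k₂ := hF2 B hB
  -- choose Y and T
  obtain ⟨Y, hYB, hYcard⟩ := Finset.exists_subset_card_eq
    (show d ≤ B.card by rw [hcardB]; exact hNA1)
  obtain ⟨T, hTB, hTcard⟩ := Finset.exists_subset_card_eq
    (show t ≤ Bᶜ.card by
      rw [Finset.card_compl, Fintype.card_fin, hcardB]; omega)
  set y : Fin d → Fin n := fun i => ((Y.orderIsoOfFin hYcard) i : Fin n) with hy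
  have hyY : ∀ i, y i ∈ Y := fun i => ((Y.orderIsoOfFin hYcard) i).2
  have hyinj : Function.Injective y := by
    intro i j hij
    exact (Y.orderIsoOfFin hYcard).injective (Subtype.ext hij)
  have hysurj : ∀ z ∈ Y, ∃ i, y i = z := by
    intro z hz
    refine ⟨(Y.orderIsoOfFin hYcard).symm ⟨z, hz⟩, ?_⟩
    show ((Y.orderIsoOfFin hYcard) ((Y.orderIsoOfFin hYcard).symm ⟨z, hz⟩) : Fin n) = z
    rw [OrderIso.apply_symm_apply]
  have hdisjYT : Disjoint Y T := by
    rw [Finset.disjoint_left]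
    intro x hxY hxT
    exact (Finset.mem_compl.1 (hTB hxT)) (hYB hxY)
  set W : Finset (Fin n) := Y ∪ T with hW
  set V : Finset (Fin n) := Wᶜ with hV
  have hWcard : W.card = d + t := by
    rw [hW, Finset.card_union_of_disjoint hdisjYT, hYcard, hTcard]
  have hVcard : V.card = n' := by
    rw [hV, Finset.card_compl, Fintype.card_fin, hWcard]
    omega
  have hcardα : Fintype.card ↥V = n' := by rw [Fintype.card_coe]; exact hVcard
  -- templates
  obtain ⟨S₀, hS₀card, hS₀inf⟩ := exists_templates d n' k' (by omega) hA5
  set e : Fin n' ≃ ↥V := (Fintype.equivFinOfCardEq hcardα).symm with he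
  set S : Fin d → Finset ↥V := fun i => (S₀ i).map e.toEmbedding with hS
  have hScard : ∀ i, (S i).card = k' := by
    intro i
    rw [hS]
    simp [Finset.card_map, hS₀card i]
  set emb : ↥V ↪ Fin n := Function.Embedding.subtype _ with hemb
  set pat : Fin d → Finset ↥V → Finset (Fin n) :=
    fun i U => (Y.erase (y i) ∪ T) ∪ U.map emb with hpat
  -- basic membership facts about pat
  have hmapV : ∀ (U : Finset ↥V) (z : Fin n), z ∈ U.map emb → z ∈ V := by
    intro U z hz
    obtain ⟨w, _, rfl⟩ := Finset.mem_map.1 hz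
    exact w.2
  have hdisj1 : ∀ (i : Fin d) (U : Finset ↥V), Disjoint (Y.erase (y i) ∪ T) (U.map emb) := by
    intro i U
    rw [Finset.disjoint_left]
    intro x hx hx2
    have hxW : x ∈ W := by
      rw [hW, Finset.mem_union]
      rcases Finset.mem_union.1 hx with h | h
      · exact Or.inl (Finset.mem_of_mem_erase h)
      · exact Or.inr h
    exact (Finset.mem_compl.1 (hmapV U x hx2)) hxW
  have hpatcard : ∀ (i : Fin d) (U : Finset ↥V), U.card = k' → (pat i U).card = k₁ := by
    intro i U hU
    rw [hpat]
    simp only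
    rw [Finset.card_union_of_disjoint (hdisj1 i U),
      Finset.card_union_of_disjoint (Finset.disjoint_of_subset_left (Finset.erase_subset _ _) hdisjYT),
      Finset.card_erase_of_mem (hyY i), hYcard, hTcard, Finset.card_map, hU]
    omega
  -- the G families
  set G : Fin d → Finset (Finset ↥V) := fun i =>
    ((Finset.univ : Finset ↥V).powersetCard k').filter
      (fun U => pat i U ∈ F (Fin.castSucc i)) with hG
  have hGsub : ∀ i, G i ⊆ (Finset.univ : Finset ↥V).powersetCard k' :=
    fun i => Finset.filter_subset _ _
  set C' : ℕ := ((Finset.univ : Finset ↥V).powersetCard k').card with hC'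
  have hC'val : C' = n'.choose k' := by
    rw [hC', Finset.card_powersetCard, Finset.card_univ, hcardα]
  -- counting : C' - |G i| ≤ (n.choose k₁) - |F i|
  have hFsub : ∀ (i : Fin d),
      F (Fin.castSucc i) ⊆ (Finset.univ : Finset (Fin n)).powersetCard k₁ := by
    intro i A hA
    rw [Finset.mem_powersetCard_univ]
    exact hF1 (Fin.castSucc i) (Fin.castSucc_lt_last i).ne A hA
  have hmissing : ∀ i : Fin d,
      C' - (G i).card ≤ n.choose k₁ - (F (Fin.castSucc i)).card := by
    intro i
    have hinj : ∀ U ∈ ((Finset.univ : Finset ↥V).powersetCard k') \ (G i),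
        pat i U ∈ ((Finset.univ : Finset (Fin n)).powersetCard k₁) \ (F (Fin.castSucc i)) := by
      intro U hU
      rw [Finset.mem_sdiff] at hU ⊢
      obtain ⟨hU1, hU2⟩ := hU
      have hUcard : U.card = k' := (Finset.mem_powersetCard_univ).1 hU1
      constructor
      · rw [Finset.mem_powersetCard_univ]
        exact hpatcard i U hUcard
      · intro hmem
        exact hU2 (Finset.mem_filter.2 ⟨hU1, hmem⟩)
    have hinj2 : Set.InjOn (pat i)
        ↑(((Finset.univ : Finset ↥V).powersetCard k') \ (G i)) := by
      intro U hU U' hU' hUU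
      have : U.map emb = U'.map emb := by
        have h1 : U.map emb = (pat i U).filter (· ∈ V) := by
          ext z
          rw [Finset.mem_filter, hpat]
          simp only [Finset.mem_union]
          constructor
          · intro hz
            exact ⟨Or.inr hz, hmapV U z hz⟩
          · rintro ⟨h1 | h2, hzV⟩
            · exfalso
              have hzW : z ∈ W := by
                rw [hW, Finset.mem_union]
                rcases h1 with h | h
                · exact Or.inl (Finset.mem_of_mem_erase h)
                · exact Or.inr h
              exact (Finset.mem_compl.1 hzV) hzW
            · exact h2
        have h2 : U'.map emb = (pat i U').filter (· ∈ V) := by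
          ext z
          rw [Finset.mem_filter, hpat]
          simp only [Finset.mem_union]
          constructor
          · intro hz
            exact ⟨Or.inr hz, hmapV U' z hz⟩
          · rintro ⟨h1 | h2, hzV⟩
            · exfalso
              have hzW : z ∈ W := by
                rw [hW, Finset.mem_union]
                rcases h1 with h | h
                · exact Or.inl (Finset.mem_of_mem_erase h)
                · exact Or.inr h
              exact (Finset.mem_compl.1 hzV) hzW
            · exact h2
        rw [h1, h2, hUU]
      exact Finset.map_injective emb this
    have hcount := Finset.card_le_card_of_injOn (pat i) hinj hinj2
    rw [Finset.card_sdiff_of_subset (hGsub i), Finset.card_sdiff_of_subset (hFsub i)] at hcount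
    simp only [Finset.card_powersetCard, Finset.card_univ, Fintype.card_fin] at hcount
    rw [hcardα] at hcount
    have hC'2 : C' = n'.choose k' := hC'val
    omega
  -- real bound on missing elements
  have hmissR : ∀ i : Fin d,
      ((n.choose k₁ - (F (Fin.castSucc i)).card : ℕ) : ℝ) ≤ ε₀ * (n.choose k₁ : ℝ) := by
    intro i
    have hm := hmeas (Fin.castSucc i) (Fin.castSucc_lt_last i).ne
    have hFle : (F (Fin.castSucc i)).card ≤ n.choose k₁ := by
      have := Finset.card_le_card (hFsub i)
      rwa [Finset.card_powersetCard, Finset.card_univ, Fintype.card_fin] at this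
    rw [Nat.cast_sub hFle]
    rw [ge_iff_le, le_div_iff₀ hchoose_pos] at hm
    nlinarith only [hm, hchoose_pos, hε0]
  -- the key counting inequality
  have hsum : ∑ i : Fin d, (C' - (G i).card) < C' := by
    have hreal : ((∑ i : Fin d, (C' - (G i).card) : ℕ) : ℝ) < (C' : ℝ) := by
      have hterm : ∀ i : Fin d, ((C' - (G i).card : ℕ) : ℝ) ≤ ε₀ * (n.choose k₁ : ℝ) := by
        intro i
        calc ((C' - (G i).card : ℕ) : ℝ)
            ≤ ((n.choose k₁ - (F (Fin.castSucc i)).card : ℕ) : ℝ) := by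
              exact_mod_cast hmissing i
          _ ≤ ε₀ * (n.choose k₁ : ℝ) := hmissR i
      have hsum1 : ((∑ i : Fin d, (C' - (G i).card) : ℕ) : ℝ)
          ≤ (d:ℝ) * (ε₀ * (n.choose k₁ : ℝ)) := by
        rw [Nat.cast_sum]
        calc (∑ i : Fin d, ((C' - (G i).card : ℕ) : ℝ))
            ≤ ∑ _i : Fin d, ε₀ * (n.choose k₁ : ℝ) := Finset.sum_le_sum (fun i _ => hterm i)
          _ = (d:ℝ) * (ε₀ * (n.choose k₁ : ℝ)) := by
              rw [Finset.sum_const, Finset.card_univ, Fintype.card_fin, nsmul_eq_mul]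
      have hd1 : (d:ℝ) / (2*((d:ℝ)+1)) ≤ 1/2 := by
        rw [div_le_div_iff₀ (by linarith only [hD0] : (0:ℝ) < 2*((d:ℝ)+1)) (by norm_num : (0:ℝ) < 2)]
        linarith only [hD0]
      have heps : (d:ℝ) * ε₀ ≤ γ ^ (b+1) / 2 := by
        have hbexp : d + t = b + 1 := by omega
        have hγpow : (0:ℝ) ≤ γ ^ (b+1) := pow_nonneg hγ0.le _
        rw [hε, hbexp]
        calc (d:ℝ) * (γ ^ (b+1) / (2*((d:ℝ)+1)))
            = γ ^ (b+1) * ((d:ℝ) / (2*((d:ℝ)+1))) := by ring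
          _ ≤ γ ^ (b+1) * (1/2) := mul_le_mul_of_nonneg_left hd1 hγpow
          _ = γ ^ (b+1) / 2 := by ring
      calc ((∑ i : Fin d, (C' - (G i).card) : ℕ) : ℝ)
          ≤ (d:ℝ) * (ε₀ * (n.choose k₁ : ℝ)) := hsum1
        _ = ((d:ℝ) * ε₀) * (n.choose k₁ : ℝ) := by ring
        _ ≤ (γ ^ (b+1) / 2) * (n.choose k₁ : ℝ) := by
            apply mul_le_mul_of_nonneg_right heps hchoose_pos.le
        _ = (γ ^ (b+1) * (n.choose k₁ : ℝ)) / 2 := by ring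
        _ ≤ (n'.choose k' : ℝ) / 2 := by linarith only [hkey]
        _ < (n'.choose k' : ℝ) := by linarith only [hchoose'_pos]
        _ = (C' : ℝ) := by rw [hC'val]
    exact_mod_cast hreal
  -- apply the union bound
  obtain ⟨π, hπ⟩ := exists_perm_all_mem S hScard G hGsub hsum
  set U : Fin d → Finset ↥V := fun i => (S i).image ⇑π with hU
  have hUF : ∀ i, pat i (U i) ∈ F (Fin.castSucc i) := by
    intro i
    have := hπ i
    rw [hG, Finset.mem_filter] at this
    exact this.2
  -- build the simplex
  set A : Fin (d+1) → Finset (Fin n) := Fin.snoc (fun i => pat i (U i)) B with hA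
  have hAlast : A (Fin.last d) = B := by rw [hA]; simp
  have hAcast : ∀ i : Fin d, A (Fin.castSucc i) = pat i (U i) := by
    intro i; rw [hA]; simp
  refine ⟨A, ?_, ?_, ?_⟩
  · -- all in families
    intro i
    rcases Fin.eq_castSucc_or_eq_last i with ⟨j, rfl⟩ | rfl
    · rw [hAcast]; exact hUF j
    · rw [hAlast]; exact hB
  · -- empty total intersection
    apply Finset.eq_empty_of_forall_notMem
    intro z hz
    have hzB : z ∈ B := by
      have := Finset.mem_inf.1 hz (Fin.last d) (Finset.mem_univ _)
      rwa [hAlast] at this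
    have hzpat : ∀ j : Fin d, z ∈ pat j (U j) := by
      intro j
      have := Finset.mem_inf.1 hz (Fin.castSucc j) (Finset.mem_univ _)
      rwa [hAcast] at this
    have hzT : z ∉ T := fun hzT => (Finset.mem_compl.1 (hTB hzT)) hzB
    by_cases hzV : z ∈ V
    · -- z in all U j, contradiction with empty intersection of templates
      have hzS₀ : ∀ j : Fin d, e.symm (π.symm ⟨z, hzV⟩) ∈ S₀ j := by
        intro j
        have hj := hzpat j
        rw [hpat] at hj
        simp only [Finset.mem_union] at hj
        have hzU : z ∈ (U j).map emb := by
          rcases hj with (h | h) | h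
          · exfalso
            have hzW : z ∈ W := by
              rw [hW, Finset.mem_union]
              exact Or.inl (Finset.mem_of_mem_erase h)
            exact (Finset.mem_compl.1 hzV) hzW
          · exact absurd h hzT
          · exact h
        obtain ⟨w, hw, hwz⟩ := Finset.mem_map.1 hzU
        have hwzeq : w = ⟨z, hzV⟩ := by
          apply Subtype.ext
          simpa [hemb] using hwz
        rw [hwzeq] at hw
        rw [hU] at hw
        obtain ⟨w', hw', hww'⟩ := Finset.mem_image.1 hw
        have : w' = π.symm ⟨z, hzV⟩ := by
          rw [← hww']; simp
        rw [this] at hw'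
        rw [hS] at hw'
        obtain ⟨w'', hw'', hww''⟩ := Finset.mem_map.1 hw'
        have : w'' = e.symm (π.symm ⟨z, hzV⟩) := by
          have : e w'' = π.symm ⟨z, hzV⟩ := hww''
          rw [← this]; simp
        rwa [this] at hw''
      have : e.symm (π.symm ⟨z, hzV⟩) ∈ Finset.univ.inf S₀ :=
        Finset.mem_inf.2 (fun j _ => hzS₀ j)
      rw [hS₀inf] at this
      exact absurd this (Finset.notMem_empty _)
    · -- z in W, must be some y j, contradiction with erase
      have hzW : z ∈ W := by
        rw [hV] at hzV
        simpa using hzV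
      have hzY : z ∈ Y := by
        rcases Finset.mem_union.1 hzW with h | h
        · exact h
        · exact absurd h hzT
      obtain ⟨j, rfl⟩ := hysurj z hzY
      have hj := hzpat j
      rw [hpat] at hj
      simp only [Finset.mem_union] at hj
      rcases hj with (h | h) | h
      · exact absurd rfl (Finset.ne_of_mem_erase h)
      · exact hzT h
      · have : y j ∈ V := hmapV _ _ h
        rw [hV] at this
        exact (Finset.mem_compl.1 this) hzW
  · -- all d-wise intersections nonempty
    intro i
    rcases Fin.eq_castSucc_or_eq_last i with ⟨j, rfl⟩ | rfl
    · -- erase (castSucc j) : common point y j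
      refine ⟨y j, Finset.mem_inf.2 ?_⟩
      intro i hi
      have hine : i ≠ Fin.castSucc j := (Finset.mem_erase.1 hi).1
      rcases Fin.eq_castSucc_or_eq_last i with ⟨j', rfl⟩ | rfl
      · rw [hAcast, hpat]
        simp only [Finset.mem_union]
        refine Or.inl (Or.inl (Finset.mem_erase.2 ⟨?_, hyY j⟩))
        intro hyy
        exact hine (congrArg Fin.castSucc (hyinj hyy).symm)
      · rw [hAlast]
        exact hYB (hyY j)
    · -- erase last : common point in T
      have hT0 : T.Nonempty := by
        rw [← Finset.card_pos, hTcard]; omega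
      obtain ⟨τ, hτ⟩ := hT0
      refine ⟨τ, Finset.mem_inf.2 ?_⟩
      intro i hi
      have hine : i ≠ Fin.last d := (Finset.mem_erase.1 hi).1
      obtain ⟨j, rfl⟩ := Fin.exists_castSucc_eq.2 hine
      rw [hAcast, hpat]
      simp only [Finset.mem_union]
      exact Or.inl (Or.inr hτ)
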